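/- Let A ∈ GL_n(ℚ) with n > 1 such that ℝ^n has no proper nonzero A^m-invariant subspace defined over ℚ for any m ≥ 1. If C is a nonempty compact subset of projective space ℙ^{n-1}(ℝ) with A(C) = C (for the induced projective action) and C is contained in a countable union of hyperplanes defined over ℚ, then a contradiction follows; i.e., every nonempty compact A-invariant subset of ℙ^{n-1}(ℝ) contains a point not lying on any hyperplane defined over ℚ. -/

import Mathlib

open Projectivization
open scoped LinearAlgebra.Projectivization

/-- The quotient topology on a real projective space. -/
instance projectivizationTopology {K V : Type*} [DivisionRing K] [AddCommGroup V]
    [Module K V] [TopologicalSpace V] : TopologicalSpace (ℙ K V) :=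
  instTopologicalSpaceQuotient


open Projectivization Set Module

namespace IrrPt

variable {n : ℕ}

/-- coercion of rational vectors to real vectors -/
noncomputable def ι : (Fin n → ℚ) → (Fin n → ℝ) := fun v i => (v i : ℝ)

/-- the real linear functional attached to a rational covector -/
noncomputable def φ (w : Fin n → ℚ) : (Fin n → ℝ) →ₗ[ℝ] ℝ :=
  ∑ i, (w i : ℝ) • LinearMap.proj i

lemma φ_apply (w : Fin n → ℚ) (v : Fin n → ℝ) : φ w v = ∑ i, (w i : ℝ) * v i := by
  simp [φ]

lemma φ_ι (w v : Fin n → ℚ) : φ w (ι v) = ((∑ i, w i * v i : ℚ) : ℝ) := by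
  rw [φ_apply]; push_cast; rfl

lemma ι_sub_smul (v v₀ : Fin n → ℚ) (c : ℚ) :
    ι (v - c • v₀) = ι v - (c : ℝ) • ι v₀ := by
  funext i
  simp only [ι, Pi.sub_apply, Pi.smul_apply, smul_eq_mul, Pi.smul_apply]
  push_cast; ring

lemma span_ι_univ : Submodule.span ℝ (ι '' (univ : Set (Fin n → ℚ))) = ⊤ := by
  rw [eq_top_iff, ← (Pi.basisFun ℝ (Fin n)).span_eq, Submodule.span_le]
  rintro x ⟨i, rfl⟩
  apply Submodule.subset_span
  refine ⟨Pi.single i 1, mem_univ _, ?_⟩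
  funext j
  simp only [ι, Pi.basisFun_apply, Pi.single_apply]
  split <;> simp

/-- elimination step: intersecting a rationally-spanned subspace with the kernel of a
rational functional yields a rationally-spanned subspace. -/
lemma span_inf_ker (S : Set (Fin n → ℚ)) (w : Fin n → ℚ) :
    ∃ S' : Set (Fin n → ℚ),
      Submodule.span ℝ (ι '' S) ⊓ LinearMap.ker (φ w) = Submodule.span ℝ (ι '' S') := by
  by_cases h : ∀ v ∈ S, (∑ i, w i * v i : ℚ) = 0
  · refine ⟨S, ?_⟩
    rw [inf_eq_left, Submodule.span_le]
    rintro x ⟨v, hv, rfl⟩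
    simp only [SetLike.mem_coe, LinearMap.mem_ker, φ_ι, h v hv, Rat.cast_zero]
  · push_neg at h
    obtain ⟨v₀, hv₀S, hv₀⟩ := h
    set c : (Fin n → ℚ) → ℚ := fun v => (∑ i, w i * v i) / (∑ i, w i * v₀ i) with hc
    have hq : ∀ v, (∑ i, w i * ((v - c v • v₀) i) : ℚ) = 0 := by
      intro v
      have he : ∀ i, w i * ((v - c v • v₀) i) = w i * v i - c v * (w i * v₀ i) := by
        intro i; simp only [Pi.sub_apply, Pi.smul_apply, smul_eq_mul]; ring
      rw [Finset.sum_congr rfl fun i _ => he i, Finset.sum_sub_distrib, ← Finset.mul_sum, hc,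
        div_mul_cancel₀ _ hv₀, sub_self]
    refine ⟨(fun v => v - c v • v₀) '' S, le_antisymm ?_ ?_⟩
    · -- hard direction
      intro x hx
      obtain ⟨hx1, hx2⟩ := Submodule.mem_inf.mp hx
      have hle : Submodule.span ℝ (ι '' S) ≤
          Submodule.span ℝ (ι '' ((fun v => v - c v • v₀) '' S)) ⊔ Submodule.span ℝ {ι v₀} := by
        rw [Submodule.span_le]
        rintro y ⟨v, hv, rfl⟩
        have : ι v = ι (v - c v • v₀) + (c v : ℝ) • ι v₀ := by
          rw [ι_sub_smul]; abel
        rw [this]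
        exact Submodule.add_mem _
          (Submodule.mem_sup_left (Submodule.subset_span ⟨v - c v • v₀, mem_image_of_mem _ hv, rfl⟩))
          (Submodule.mem_sup_right (Submodule.smul_mem _ _ (Submodule.mem_span_singleton_self _)))
      obtain ⟨y, hy, z, hz, rfl⟩ := Submodule.mem_sup.mp (hle hx1)
      obtain ⟨t, rfl⟩ := Submodule.mem_span_singleton.mp hz
      have hker : Submodule.span ℝ (ι '' ((fun v => v - c v • v₀) '' S)) ≤ LinearMap.ker (φ w) := by
        rw [Submodule.span_le]
        rintro u ⟨v', ⟨v, hv, rfl⟩, rfl⟩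
        simp only [SetLike.mem_coe, LinearMap.mem_ker, φ_ι]
        rw [hq v, Rat.cast_zero]
      have hy0 : φ w y = 0 := hker hy
      have : φ w (y + t • ι v₀) = t * ((∑ i, w i * v₀ i : ℚ) : ℝ) := by
        rw [map_add, hy0, map_smul, φ_ι, zero_add, smul_eq_mul]
      rw [LinearMap.mem_ker] at hx2
      rw [hx2] at this
      have ht : t = 0 := by
        have : t * ((∑ i, w i * v₀ i : ℚ) : ℝ) = 0 := this.symm
        rcases mul_eq_zero.mp this with h' | h'
        · exact h'
        · exact absurd (by exact_mod_cast h') hv₀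
      rw [ht, zero_smul, add_zero]
      exact hy
    · rw [Submodule.span_le]
      rintro u ⟨v', ⟨v, hv, rfl⟩, rfl⟩
      rw [SetLike.mem_coe, Submodule.mem_inf]
      constructor
      · rw [ι_sub_smul]
        exact Submodule.sub_mem _ (Submodule.subset_span ⟨v, hv, rfl⟩)
          (Submodule.smul_mem _ _ (Submodule.subset_span ⟨v₀, hv₀S, rfl⟩))
      · rw [LinearMap.mem_ker]
        show φ w (ι ((fun v => v - c v • v₀) v)) = 0
        rw [φ_ι, hq v, Rat.cast_zero]

end IrrPt

namespace IrrPt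

variable {n : ℕ}

/-- a subspace is a (nonempty) finite intersection of kernels of nonzero rational functionals -/
def P (K : Submodule ℝ (Fin n → ℝ)) : Prop :=
  ∃ T : Finset (Fin n → ℚ), (∀ w ∈ T, w ≠ 0) ∧ T.Nonempty ∧
    K = T.inf fun w => LinearMap.ker (φ w)

lemma P.inf {K₁ K₂ : Submodule ℝ (Fin n → ℝ)} (h₁ : P K₁) (h₂ : P K₂) : P (K₁ ⊓ K₂) := by
  classical
  obtain ⟨T₁, hw₁, hne₁, rfl⟩ := h₁
  obtain ⟨T₂, hw₂, hne₂, rfl⟩ := h₂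
  exact ⟨T₁ ∪ T₂, fun w hw => (Finset.mem_union.mp hw).elim (hw₁ w) (hw₂ w),
    hne₁.mono Finset.subset_union_left, (Finset.inf_union).symm⟩

lemma rational_of_finset_inf (T : Finset (Fin n → ℚ)) :
    ∃ S : Set (Fin n → ℚ),
      (T.inf fun w => LinearMap.ker (φ w)) = Submodule.span ℝ (ι '' S) := by
  classical
  induction T using Finset.induction_on with
  | empty => exact ⟨univ, by rw [Finset.inf_empty, span_ι_univ]⟩
  | @insert a T ha ih =>
      obtain ⟨S, hS⟩ := ih
      obtain ⟨S', hS'⟩ := span_inf_ker S a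
      exact ⟨S', by rw [Finset.inf_insert, hS, inf_comm, hS']⟩

lemma P.rational {K : Submodule ℝ (Fin n → ℝ)} (h : P K) :
    ∃ S : Set (Fin n → ℚ), K = Submodule.span ℝ (ι '' S) := by
  obtain ⟨T, -, -, rfl⟩ := h
  exact rational_of_finset_inf T

lemma φ_ne_zero {w : Fin n → ℚ} (hw : w ≠ 0) : LinearMap.ker (φ w) ≠ ⊤ := by
  obtain ⟨j, hj⟩ := Function.ne_iff.mp hw
  intro h
  have : φ w (Pi.single j 1) = 0 := by
    rw [← LinearMap.mem_ker, h]; trivial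
  rw [φ_apply] at this
  simp only [Pi.single_apply] at this
  rw [Finset.sum_eq_single j (fun b _ hb => by rw [if_neg hb, mul_zero])
    (fun hj' => absurd (Finset.mem_univ j) hj')] at this
  simp at this
  exact hj this

lemma P.finrank_lt {K : Submodule ℝ (Fin n → ℝ)} (h : P K) : finrank ℝ K < n := by
  obtain ⟨T, hw, ⟨a, haT⟩, rfl⟩ := h
  have hne : (T.inf fun w => LinearMap.ker (φ w)) ≠ ⊤ := by
    intro htop
    exact φ_ne_zero (hw a haT) (top_le_iff.mp (htop ▸ Finset.inf_le haT))
  have h2 := Submodule.finrank_lt hne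
  simpa using h2

end IrrPt

namespace IrrPt

variable {n : ℕ}

/-- real linear map attached to a rational matrix -/
noncomputable def Φ (M : Matrix (Fin n) (Fin n) ℚ) : (Fin n → ℝ) →ₗ[ℝ] (Fin n → ℝ) :=
  Matrix.mulVecLin (M.map fun q : ℚ => (q : ℝ))

lemma map_cast (M : Matrix (Fin n) (Fin n) ℚ) :
    M.map (fun q : ℚ => (q : ℝ)) = M.map (Rat.castHom ℝ) := rfl

lemma Φ_mul (M N : Matrix (Fin n) (Fin n) ℚ) : Φ (M * N) = (Φ M).comp (Φ N) := by
  rw [Φ, Φ, Φ, map_cast, map_cast, map_cast, Matrix.map_mul, Matrix.mulVecLin_mul]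

lemma Φ_one : Φ (1 : Matrix (Fin n) (Fin n) ℚ) = LinearMap.id := by
  rw [Φ, Matrix.map_one _ (by norm_num) (by norm_num), Matrix.mulVecLin_one]

lemma φ_comp_Φ (w : Fin n → ℚ) (M : Matrix (Fin n) (Fin n) ℚ) :
    (φ w).comp (Φ M) = φ (Matrix.vecMul w M) := by
  apply LinearMap.ext; intro x
  simp only [LinearMap.comp_apply, Φ, Matrix.mulVecLin_apply, φ_apply, Matrix.mulVec,
    Matrix.vecMul, dotProduct, Matrix.map_apply, Finset.mul_sum]
  rw [Finset.sum_comm]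
  apply Finset.sum_congr rfl; intro i _
  push_cast [Finset.sum_mul]
  apply Finset.sum_congr rfl; intro j _
  ring

lemma P.map {M N : Matrix (Fin n) (Fin n) ℚ} (hMN : M * N = 1) (hNM : N * M = 1)
    {K : Submodule ℝ (Fin n → ℝ)} (hK : P K) : P (Submodule.map (Φ M) K) := by
  classical
  have hMNfun : ∀ x, Φ M (Φ N x) = x := by
    intro x
    have := Φ_mul M N
    rw [hMN, Φ_one] at this
    exact (LinearMap.ext_iff.mp this.symm x)
  have hNMfun : ∀ x, Φ N (Φ M x) = x := by
    intro x
    have := Φ_mul N M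
    rw [hNM, Φ_one] at this
    exact (LinearMap.ext_iff.mp this.symm x)
  have hcomap : Submodule.map (Φ M) K = Submodule.comap (Φ N) K := by
    ext x
    constructor
    · rintro ⟨y, hy, rfl⟩
      simpa [Submodule.mem_comap, hNMfun y] using hy
    · intro hx
      exact ⟨Φ N x, hx, hMNfun x⟩
  obtain ⟨T, hw, hne, rfl⟩ := hK
  rw [hcomap]
  refine ⟨T.image (fun w => Matrix.vecMul w N), ?_, hne.image _, ?_⟩
  · intro w' hw'
    obtain ⟨w, hwT, rfl⟩ := Finset.mem_image.mp hw'
    intro h0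
    apply hw w hwT
    have : Matrix.vecMul (Matrix.vecMul w N) M = Matrix.vecMul (0 : Fin n → ℚ) M := by rw [h0]
    rwa [Matrix.vecMul_vecMul, hNM, Matrix.vecMul_one, Matrix.zero_vecMul] at this
  · rw [Finset.inf_image, Finset.inf_eq_iInf, Finset.inf_eq_iInf, Submodule.comap_iInf]
    apply iInf_congr; intro w
    rw [Submodule.comap_iInf]
    apply iInf_congr; intro hw'
    rw [← LinearMap.ker_comp, φ_comp_Φ]
    rfl

end IrrPt

namespace IrrPt

variable {n : ℕ}

lemma exists_inverse {A : Matrix (Fin n) (Fin n) ℚ} (hinj : Function.Injective (Φ A)) :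
    ∃ B : Matrix (Fin n) (Fin n) ℚ, A * B = 1 ∧ B * A = 1 := by
  classical
  have hdet : A.det ≠ 0 := by
    intro h0
    have : (A.map (Rat.castHom ℝ)).det = 0 := by
      have := (Rat.castHom ℝ).map_det A
      rw [h0, map_zero] at this
      exact this.symm
    obtain ⟨v, hv, hv0⟩ := (Matrix.exists_mulVec_eq_zero_iff).mpr this
    apply hv
    apply hinj
    rw [map_zero]
    rw [Φ, Matrix.mulVecLin_apply]
    exact hv0
  have hU : IsUnit A.det := isUnit_iff_ne_zero.mpr hdet
  exact ⟨A⁻¹, Matrix.mul_nonsing_inv _ hU, Matrix.nonsing_inv_mul _ hU⟩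

lemma iterate_map_eq (M : Matrix (Fin n) (Fin n) ℚ) (m : ℕ) (K : Submodule ℝ (Fin n → ℝ)) :
    (Submodule.map (Φ M))^[m] K = Submodule.map (Φ (M ^ m)) K := by
  induction m with
  | zero => simp [Φ_one, Submodule.map_id]
  | succ m ih =>
      rw [Function.iterate_succ_apply', ih, pow_succ']
      rw [Φ_mul, Submodule.map_comp]

lemma finrank_map_Φ {M N : Matrix (Fin n) (Fin n) ℚ} (hMN : M * N = 1) (hNM : N * M = 1)
    (K : Submodule ℝ (Fin n → ℝ)) :
    finrank ℝ (Submodule.map (Φ M) K) = finrank ℝ K := by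
  have h1 := Φ_mul N M
  rw [hNM, Φ_one] at h1
  have h2 : ∀ z, Φ N (Φ M z) = z := fun z => by
    have := LinearMap.ext_iff.mp h1 z
    simpa using this.symm
  have hinj : Function.Injective (Φ M) := by
    intro x y hxy
    rw [← h2 x, ← h2 y, hxy]
  let e := LinearEquiv.ofInjectiveEndo (Φ M) hinj
  have : Submodule.map (Φ M) K = Submodule.map (e : (Fin n → ℝ) →ₗ[ℝ] (Fin n → ℝ)) K := by
    congr 1
  rw [this, LinearEquiv.finrank_map_eq]

end IrrPt

namespace IrrPt

variable {n : ℕ}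

/-- scaling by a unit as a homeomorphism of the set of nonzero vectors -/
noncomputable def unitsSmul (c : ℝˣ) :
    {v : Fin n → ℝ // v ≠ 0} ≃ₜ {v : Fin n → ℝ // v ≠ 0} where
  toFun v := ⟨(c : ℝ) • v.1, smul_ne_zero c.ne_zero v.2⟩
  invFun v := ⟨((c⁻¹ : ℝˣ) : ℝ) • v.1, smul_ne_zero c⁻¹.ne_zero v.2⟩
  left_inv v := by
    ext1
    simp [smul_smul]
  right_inv v := by
    ext1
    simp [smul_smul]
  continuous_toFun := by fun_prop
  continuous_invFun := by fun_prop

lemma isOpenQuotientMap_mk' :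
    IsOpenQuotientMap (Projectivization.mk' ℝ : {v : Fin n → ℝ // v ≠ 0} → ℙ ℝ (Fin n → ℝ)) := by
  refine ⟨fun x => Quotient.inductionOn' x fun v => ⟨v, rfl⟩, continuous_quotient_mk', ?_⟩
  intro U hU
  have hpre : (Projectivization.mk' ℝ) ⁻¹' ((Projectivization.mk' ℝ) '' U) =
      ⋃ c : ℝˣ, (unitsSmul c) '' U := by
    ext v
    simp only [Set.mem_preimage, Set.mem_image, Set.mem_iUnion]
    constructor
    · rintro ⟨u, hu, huv⟩
      rw [mk'_eq_mk, mk'_eq_mk, mk_eq_mk_iff] at huv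
      obtain ⟨a, ha⟩ := huv
      refine ⟨a⁻¹, u, hu, ?_⟩
      ext1
      show ((a⁻¹ : ℝˣ) : ℝ) • (u : Fin n → ℝ) = v
      rw [← ha]
      simp [Units.smul_def, smul_smul]
    · rintro ⟨c, u, hu, hcu⟩
      refine ⟨u, hu, ?_⟩
      rw [mk'_eq_mk, mk'_eq_mk, mk_eq_mk_iff]
      refine ⟨c⁻¹, ?_⟩
      rw [← hcu]
      show ((c⁻¹ : ℝˣ) : ℝ) • ((c : ℝ) • (u : Fin n → ℝ)) = u
      simp [smul_smul]
  show IsOpen ((Projectivization.mk' ℝ : {v : Fin n → ℝ // v ≠ 0} → ℙ ℝ (Fin n → ℝ)) ⁻¹'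
    (Projectivization.mk' ℝ '' U))
  rw [hpre]
  exact isOpen_iUnion fun c => (unitsSmul c).isOpenMap U hU

lemma mk_eq_mk_iff_minors {v u : Fin n → ℝ} (hv : v ≠ 0) (hu : u ≠ 0) :
    Projectivization.mk ℝ v hv = Projectivization.mk ℝ u hu ↔
      ∀ i j, v i * u j = v j * u i := by
  rw [mk_eq_mk_iff']
  constructor
  · rintro ⟨a, rfl⟩ i j
    simp only [Pi.smul_apply, smul_eq_mul]
    ring
  · intro h
    obtain ⟨j, hj⟩ := Function.ne_iff.mp hu
    refine ⟨v j / u j, ?_⟩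
    funext i
    rw [Pi.smul_apply, smul_eq_mul, div_mul_eq_mul_div, h j i, mul_div_cancel_right₀ _ hj]

lemma t2 : T2Space (ℙ ℝ (Fin n → ℝ)) := by
  have hq : IsOpenQuotientMap (Prod.map (Projectivization.mk' ℝ) (Projectivization.mk' ℝ)) :=
    (isOpenQuotientMap_mk' (n := n)).prodMap (isOpenQuotientMap_mk' (n := n))
  rw [t2_iff_isClosed_diagonal, ← hq.isQuotientMap.isClosed_preimage]
  have hset : Prod.map (Projectivization.mk' ℝ) (Projectivization.mk' ℝ) ⁻¹'
      Set.diagonal (ℙ ℝ (Fin n → ℝ)) =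
      ⋂ (i : Fin n) (j : Fin n), {p : {v : Fin n → ℝ // v ≠ 0} × {v : Fin n → ℝ // v ≠ 0} |
        p.1.1 i * p.2.1 j = p.1.1 j * p.2.1 i} := by
    ext ⟨v, u⟩
    simp only [Set.mem_preimage, Prod.map_apply, Set.mem_diagonal_iff, Set.mem_iInter,
      Set.mem_setOf_eq]
    rw [mk'_eq_mk, mk'_eq_mk, mk_eq_mk_iff_minors v.2 u.2]
  rw [hset]
  refine isClosed_iInter fun i => isClosed_iInter fun j => isClosed_eq ?_ ?_
  · exact ((continuous_apply i).comp (continuous_subtype_val.comp continuous_fst)).mul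
      ((continuous_apply j).comp (continuous_subtype_val.comp continuous_snd))
  · exact ((continuous_apply j).comp (continuous_subtype_val.comp continuous_fst)).mul
      ((continuous_apply i).comp (continuous_subtype_val.comp continuous_snd))

/-- the set of points of projective space lying in a subspace -/
def PK (K : Submodule ℝ (Fin n → ℝ)) : Set (ℙ ℝ (Fin n → ℝ)) := {x | x.rep ∈ K}

lemma mem_PK_mk {K : Submodule ℝ (Fin n → ℝ)} {v : Fin n → ℝ} (hv : v ≠ 0) :
    Projectivization.mk ℝ v hv ∈ PK K ↔ v ∈ K := by
  obtain ⟨a, ha⟩ := exists_smul_eq_mk_rep ℝ v hv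
  show (Projectivization.mk ℝ v hv).rep ∈ K ↔ _
  rw [← ha, Units.smul_def, Submodule.smul_mem_iff _ a.ne_zero]

lemma isClosed_PK (K : Submodule ℝ (Fin n → ℝ)) : IsClosed (PK K) := by
  rw [← (isOpenQuotientMap_mk' (n := n)).isQuotientMap.isClosed_preimage]
  have : (Projectivization.mk' ℝ) ⁻¹' PK K = Subtype.val ⁻¹' (K : Set (Fin n → ℝ)) := by
    ext v
    rw [Set.mem_preimage, mk'_eq_mk, mem_PK_mk v.2]
    rfl
  rw [this]
  exact (Submodule.closed_of_finiteDimensional K).preimage continuous_subtype_val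

lemma PK_inter (K₁ K₂ : Submodule ℝ (Fin n → ℝ)) : PK K₁ ∩ PK K₂ = PK (K₁ ⊓ K₂) := rfl

lemma continuous_pmap (f : (Fin n → ℝ) →ₗ[ℝ] (Fin n → ℝ)) (hf : Function.Injective f) :
    Continuous (Projectivization.map f hf) := by
  unfold Projectivization.map
  apply Continuous.quotient_map'
  exact (f.continuous_of_finiteDimensional.comp continuous_subtype_val).subtype_mk _

end IrrPt

namespace IrrPt

variable {n : ℕ}

/-- relative interior of a subset `T` within `D`, at the level of the subtype `D` -/
lemma image_interior_preimage (D T : Set (ℙ ℝ (Fin n → ℝ))) :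
    Subtype.val '' (interior ((Subtype.val : D → ℙ ℝ (Fin n → ℝ)) ⁻¹' T)) =
      D \ closure (D \ T) := by
  have h1 : interior ((Subtype.val : D → ℙ ℝ (Fin n → ℝ)) ⁻¹' T) =
      (Subtype.val : D → ℙ ℝ (Fin n → ℝ)) ⁻¹' (closure (D \ T))ᶜ := by
    ext x
    rw [← compl_compl (interior _), ← closure_compl, Set.mem_compl_iff, closure_subtype]
    rw [Set.mem_preimage, Set.mem_compl_iff]
    have : Subtype.val '' ((Subtype.val ⁻¹' T : Set D)ᶜ) = D \ T := by
      rw [← Set.preimage_compl, Subtype.image_preimage_coe]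
      ext z
      simp only [Set.mem_inter_iff, Set.mem_compl_iff, Set.mem_diff]
    rw [this]
  rw [h1, Subtype.image_preimage_coe]
  exact (Set.diff_eq D (closure (D \ T))).symm

lemma pmap_surjective (f : (Fin n → ℝ) →ₗ[ℝ] (Fin n → ℝ)) (hf : Function.Injective f)
    (f' : (Fin n → ℝ) →ₗ[ℝ] (Fin n → ℝ)) (hff' : ∀ x, f (f' x) = x) :
    Function.Surjective (Projectivization.map f hf) := by
  intro x
  induction x using Projectivization.ind with
  | h v hv =>
      have hv' : f' v ≠ 0 := by
        intro h
        apply hv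
        rw [← hff' v, h, map_zero]
      exact ⟨Projectivization.mk ℝ (f' v) hv', by rw [Projectivization.map_mk]; congr 1; exact hff' v⟩

lemma pmap_preimage_PK (f : (Fin n → ℝ) →ₗ[ℝ] (Fin n → ℝ)) (hf : Function.Injective f)
    (K : Submodule ℝ (Fin n → ℝ)) :
    (Projectivization.map f hf) ⁻¹' PK (Submodule.map f K) = PK K := by
  ext x
  induction x using Projectivization.ind with
  | h v hv =>
      rw [Set.mem_preimage, Projectivization.map_mk, mem_PK_mk, mem_PK_mk hv]
      constructor
      · rintro ⟨y, hy, hyv⟩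
        rwa [← hf hyv]
      · intro hvK
        exact ⟨v, hvK, rfl⟩

lemma pmap_image_PK (f : (Fin n → ℝ) →ₗ[ℝ] (Fin n → ℝ)) (hf : Function.Injective f)
    (f' : (Fin n → ℝ) →ₗ[ℝ] (Fin n → ℝ)) (hff' : ∀ x, f (f' x) = x)
    (K : Submodule ℝ (Fin n → ℝ)) :
    (Projectivization.map f hf) '' PK K = PK (Submodule.map f K) := by
  rw [← pmap_preimage_PK f hf K]
  exact Set.image_preimage_eq _ (pmap_surjective f hf f' hff')

end IrrPt

namespace IrrPt

lemma exists_minimal_invariant {X : Type*} [TopologicalSpace X] [T2Space X]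
    (g : X → X) (hg : Continuous g)
    (C : Set X) (hC : C.Nonempty) (hcpt : IsCompact C) (hinv : g '' C = C) :
    ∃ D, D ⊆ C ∧ D.Nonempty ∧ IsCompact D ∧ g '' D = D ∧
      ∀ E, E ⊆ D → E.Nonempty → IsCompact E → g '' E = E → E = D := by
  set S : Set (Set X) := {K | K ⊆ C ∧ K.Nonempty ∧ IsCompact K ∧ g '' K = K} with hS
  have hCS : C ∈ S := ⟨le_refl C, hC, hcpt, hinv⟩
  have hchain : ∀ c ⊆ S, IsChain (· ⊆ ·) c → c.Nonempty → ∃ lb ∈ S, ∀ s ∈ c, lb ⊆ s := by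
    intro c hcS hchain hcne
    obtain ⟨K₀, hK₀⟩ := hcne
    have hdir : DirectedOn (· ⊇ ·) c := by
      intro x hx y hy
      rcases eq_or_ne x y with rfl | hne
      · exact ⟨x, hx, le_refl x, le_refl x⟩
      · rcases hchain hx hy hne with h | h
        · exact ⟨x, hx, le_refl x, h⟩
        · exact ⟨y, hy, h, le_refl y⟩
    haveI : Nonempty c := ⟨⟨K₀, hK₀⟩⟩
    have hnon : ∀ U ∈ c, U.Nonempty := fun U hU => (hcS hU).2.1
    have hcomp : ∀ U ∈ c, IsCompact U := fun U hU => (hcS hU).2.2.1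
    have hclosed : ∀ U ∈ c, IsClosed U := fun U hU => (hcomp U hU).isClosed
    refine ⟨⋂₀ c, ⟨?_, ?_, ?_, ?_⟩, fun s hs => Set.sInter_subset_of_mem hs⟩
    · exact (Set.sInter_subset_of_mem hK₀).trans (hcS hK₀).1
    · exact IsCompact.nonempty_sInter_of_directed_nonempty_isCompact_isClosed hdir hnon hcomp
        hclosed
    · exact (hcomp K₀ hK₀).of_isClosed_subset (isClosed_sInter hclosed)
        (Set.sInter_subset_of_mem hK₀)
    · apply le_antisymm
      · intro y hy
        obtain ⟨x, hx, rfl⟩ := hy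
        intro K hK
        rw [← (hcS hK).2.2.2]
        exact ⟨x, hx K hK, rfl⟩
      · -- the hard inclusion
        intro x hx
        set F : c → Set X := fun K => g ⁻¹' {x} ∩ (K : Set X) with hF
        have hFne : ∀ K : c, (F K).Nonempty := by
          rintro ⟨K, hK⟩
          have hxK : x ∈ K := hx K hK
          rw [← (hcS hK).2.2.2] at hxK
          obtain ⟨y, hy, hyx⟩ := hxK
          exact ⟨y, by simpa [hF] using ⟨hyx, hy⟩⟩
        have hFcl : ∀ K : c, IsClosed (F K) := fun K =>
          (IsClosed.preimage hg isClosed_singleton).inter (hclosed K K.2)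
        have hFcomp : ∀ K : c, IsCompact (F K) := fun K =>
          (hcomp K K.2).of_isClosed_subset (hFcl K) Set.inter_subset_right
        have hFdir : Directed (· ⊇ ·) F := by
          rintro ⟨K₁, h₁⟩ ⟨K₂, h₂⟩
          obtain ⟨K₃, h₃, h₃₁, h₃₂⟩ := hdir K₁ h₁ K₂ h₂
          exact ⟨⟨K₃, h₃⟩, Set.inter_subset_inter_right _ h₃₁,
            Set.inter_subset_inter_right _ h₃₂⟩
        obtain ⟨y, hy⟩ := IsCompact.nonempty_iInter_of_directed_nonempty_isCompact_isClosed
          F hFdir hFne hFcomp hFcl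
        simp only [Set.mem_iInter, hF, Set.mem_inter_iff, Set.mem_preimage,
          Set.mem_singleton_iff] at hy
        refine ⟨y, ?_, (hy ⟨K₀, hK₀⟩).1⟩
        intro K hK
        exact (hy ⟨K, hK⟩).2
  obtain ⟨D, hDC, hmin⟩ := zorn_superset_nonempty S hchain C hCS
  obtain ⟨hDS, hDmin⟩ := hmin
  exact ⟨D, hDS.1, hDS.2.1, hDS.2.2.1, hDS.2.2.2,
    fun E hED hEne hEcomp hEinv =>
      le_antisymm hED (hDmin ⟨hED.trans hDS.1, hEne, hEcomp, hEinv⟩ hED)⟩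

end IrrPt


/-- If `A ∈ GL_n(ℚ)` (given by an injective linear action on `ℝ^n`) has, for every
`m ≥ 1`, no proper nonzero `A^m`-invariant subspace of `ℝ^n` defined over `ℚ`, then every
nonempty compact `A`-invariant subset of `ℙ^{n-1}(ℝ)` contains a point lying on no
hyperplane defined over `ℚ`. -/
theorem minimal_set_meets_irrational_points {n : ℕ} (hn : 1 < n)
    (A : Matrix (Fin n) (Fin n) ℚ)
    (f : (Fin n → ℝ) →ₗ[ℝ] (Fin n → ℝ))
    (hf : f = Matrix.mulVecLin (A.map (fun q : ℚ => (q : ℝ))))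
    (hfinj : Function.Injective f)
    (hsub : ∀ m : ℕ, 1 ≤ m → ∀ W : Submodule ℝ (Fin n → ℝ),
      (∃ S : Set (Fin n → ℚ),
        W = Submodule.span ℝ ((fun v : Fin n → ℚ => fun i => ((v i : ℝ))) '' S)) →
      (∀ x ∈ W, Matrix.mulVec ((A ^ m).map (fun q : ℚ => (q : ℝ))) x ∈ W) →
      W = ⊥ ∨ W = ⊤)
    (C : Set (ℙ ℝ (Fin n → ℝ))) (hC : C.Nonempty) (hcpt : IsCompact C)
    (hinv : Projectivization.map f hfinj '' C = C) :
    ∃ x ∈ C, ∀ w : Fin n → ℚ, w ≠ 0 → ∑ i, (w i : ℝ) * x.rep i ≠ 0 := by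
  classical
  by_contra hcon
  push_neg at hcon
  haveI ht2 : T2Space (ℙ ℝ (Fin n → ℝ)) := IrrPt.t2
  have hfΦ : f = IrrPt.Φ A := hf
  obtain ⟨B, hAB, hBA⟩ := IrrPt.exists_inverse (A := A) (by rw [← hfΦ]; exact hfinj)
  set fB : (Fin n → ℝ) →ₗ[ℝ] (Fin n → ℝ) := IrrPt.Φ B with hfB
  have hffB : ∀ x, f (fB x) = x := by
    intro x
    have h1 := IrrPt.Φ_mul A B
    rw [hAB, IrrPt.Φ_one] at h1
    have := LinearMap.ext_iff.mp h1.symm x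
    simpa [← hfΦ] using this
  have hfBf : ∀ x, fB (f x) = x := by
    intro x
    have h1 := IrrPt.Φ_mul B A
    rw [hBA, IrrPt.Φ_one] at h1
    have := LinearMap.ext_iff.mp h1.symm x
    simpa [← hfΦ] using this
  have hfBinj : Function.Injective fB := by
    intro x y hxy
    rw [← hffB x, ← hffB y, hxy]
  set g : ℙ ℝ (Fin n → ℝ) → ℙ ℝ (Fin n → ℝ) := Projectivization.map f hfinj with hgdef
  have hgc : Continuous g := IrrPt.continuous_pmap f hfinj
  set g' : ℙ ℝ (Fin n → ℝ) → ℙ ℝ (Fin n → ℝ) := Projectivization.map fB hfBinj with hg'def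
  have hgg' : ∀ x, g (g' x) = x := by
    intro x
    induction x using Projectivization.ind with
    | h v hv =>
        rw [hg'def, hgdef, Projectivization.map_mk, Projectivization.map_mk]
        simp only [hffB]
  have hg'g : ∀ x, g' (g x) = x := by
    intro x
    induction x using Projectivization.ind with
    | h v hv =>
        rw [hg'def, hgdef, Projectivization.map_mk, Projectivization.map_mk]
        simp only [hfBf]
  set G : ℙ ℝ (Fin n → ℝ) ≃ₜ ℙ ℝ (Fin n → ℝ) :=
    { toFun := g, invFun := g', left_inv := hg'g, right_inv := hgg',
      continuous_toFun := hgc, continuous_invFun := IrrPt.continuous_pmap fB hfBinj } with hG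
  have hGg : ⇑G = g := rfl
  have hginj : Function.Injective g := G.injective
  -- minimal invariant compact subset
  obtain ⟨D, hDC, hDne, hDcomp, hDinv, hDmin⟩ :=
    IrrPt.exists_minimal_invariant g hgc C hC hcpt hinv
  haveI : CompactSpace D := isCompact_iff_compactSpace.mp hDcomp
  haveI : Nonempty D := hDne.to_subtype
  -- Baire: some rational hyperplane has nonempty relative interior
  set F : {w : Fin n → ℚ // w ≠ 0} → Set D :=
    fun w => (Subtype.val : D → ℙ ℝ (Fin n → ℝ)) ⁻¹' (IrrPt.PK (LinearMap.ker (IrrPt.φ w.1)))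
    with hFdef
  have hFclosed : ∀ w, IsClosed (F w) :=
    fun w => (IrrPt.isClosed_PK _).preimage continuous_subtype_val
  have hFcover : ⋃ w, F w = Set.univ := by
    ext x
    simp only [Set.mem_iUnion, Set.mem_univ, iff_true]
    obtain ⟨w, hw, hsum⟩ := hcon x.1 (hDC x.2)
    refine ⟨⟨w, hw⟩, ?_⟩
    show x.1.rep ∈ LinearMap.ker (IrrPt.φ w)
    rw [LinearMap.mem_ker, IrrPt.φ_apply]
    exact hsum
  obtain ⟨w₀, hw₀⟩ := nonempty_interior_of_iUnion_of_closed hFclosed hFcover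
  -- minimal dimension of a rational subspace with nonempty relative interior
  set intD : Submodule ℝ (Fin n → ℝ) → Set D :=
    fun K => interior ((Subtype.val : D → ℙ ℝ (Fin n → ℝ)) ⁻¹' (IrrPt.PK K)) with hintD
  set cand : Set ℕ := {r | ∃ K, IrrPt.P K ∧ finrank ℝ K = r ∧ (intD K).Nonempty} with hcand
  have hPker : IrrPt.P (LinearMap.ker (IrrPt.φ w₀.1)) := by
    refine ⟨{w₀.1}, ?_, Finset.singleton_nonempty _, by simp⟩
    intro w hw
    rw [Finset.mem_singleton] at hw
    rw [hw]
    exact w₀.2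
  have hcandne : cand.Nonempty :=
    ⟨finrank ℝ (LinearMap.ker (IrrPt.φ w₀.1)), LinearMap.ker (IrrPt.φ w₀.1), hPker, rfl, hw₀⟩
  set d : ℕ := sInf cand with hd
  obtain ⟨K₀, hK₀P, hK₀rank, hK₀int⟩ : d ∈ cand := Nat.sInf_mem hcandne
  have hdlt : d < n := hK₀rank ▸ hK₀P.finrank_lt
  have hmind : ∀ K, IrrPt.P K → (intD K).Nonempty → d ≤ finrank ℝ K :=
    fun K hP hne => Nat.sInf_le ⟨K, hP, rfl, hne⟩
  set fam : Set (Submodule ℝ (Fin n → ℝ)) :=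
    {K | IrrPt.P K ∧ finrank ℝ K = d ∧ (intD K).Nonempty} with hfam
  have hK₀fam : K₀ ∈ fam := ⟨hK₀P, hK₀rank, hK₀int⟩
  -- disjointness of relative interiors
  have hdisj : ∀ K₁ ∈ fam, ∀ K₂ ∈ fam, K₁ ≠ K₂ → intD K₁ ∩ intD K₂ = ∅ := by
    intro K₁ h₁ K₂ h₂ hne
    by_contra hcontra
    obtain ⟨x, hx⟩ := Set.nonempty_iff_ne_empty.mpr hcontra
    have hsubint : intD K₁ ∩ intD K₂ ⊆
        (Subtype.val : D → ℙ ℝ (Fin n → ℝ)) ⁻¹' (IrrPt.PK (K₁ ⊓ K₂)) := by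
      rw [← IrrPt.PK_inter, Set.preimage_inter]
      exact Set.inter_subset_inter interior_subset interior_subset
    have hopen : IsOpen (intD K₁ ∩ intD K₂) := isOpen_interior.inter isOpen_interior
    have hintne : (intD (K₁ ⊓ K₂)).Nonempty :=
      ⟨x, (hopen.subset_interior_iff.mpr hsubint) hx⟩
    have hlt : K₁ ⊓ K₂ < K₁ := by
      rcases lt_or_eq_of_le (inf_le_left : K₁ ⊓ K₂ ≤ K₁) with h | h
      · exact h
      · exfalso
        apply hne
        exact Submodule.eq_of_le_of_finrank_eq (inf_eq_left.mp h)
          (by rw [h₁.2.1, h₂.2.1])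
    have hge : d ≤ finrank ℝ ↥(K₁ ⊓ K₂) := hmind _ (h₁.1.inf h₂.1) hintne
    have hltd : finrank ℝ ↥(K₁ ⊓ K₂) < d := h₁.2.1 ▸ Submodule.finrank_lt_finrank_of_lt hlt
    omega
  -- relative interiors as subsets of the ambient space
  have hrint : ∀ K, Subtype.val '' intD K = D \ closure (D \ IrrPt.PK K) :=
    fun K => IrrPt.image_interior_preimage D (IrrPt.PK K)
  have hgPK : ∀ K, g '' IrrPt.PK K = IrrPt.PK (Submodule.map f K) :=
    fun K => IrrPt.pmap_image_PK f hfinj fB hffB K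
  have hgrint : ∀ K, g '' (D \ closure (D \ IrrPt.PK K)) =
      D \ closure (D \ IrrPt.PK (Submodule.map f K)) := by
    intro K
    rw [Set.image_diff hginj, hDinv, ← hGg, G.image_closure, hGg,
      Set.image_diff hginj, hDinv, hgPK]
  -- the maps K ↦ f(K) and K ↦ fB(K) preserve the family
  have hfP : ∀ {K}, IrrPt.P K → IrrPt.P (Submodule.map f K) := by
    intro K hK
    rw [hfΦ]
    exact hK.map hAB hBA
  have hfBP : ∀ {K}, IrrPt.P K → IrrPt.P (Submodule.map fB K) := by
    intro K hK
    rw [hfB]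
    exact hK.map hBA hAB
  have hintD_iff : ∀ K, (intD K).Nonempty ↔ (D \ closure (D \ IrrPt.PK K)).Nonempty := by
    intro K
    rw [← hrint K]
    exact ⟨fun h => h.image _, fun h => h.of_image⟩
  have hfamf : ∀ K ∈ fam, Submodule.map f K ∈ fam := by
    intro K hK
    refine ⟨hfP hK.1, ?_, ?_⟩
    · rw [hfΦ, IrrPt.finrank_map_Φ hAB hBA]
      exact hK.2.1
    · rw [hintD_iff, ← hgrint]
      exact ((hintD_iff K).mp hK.2.2).image g
  have hmapfB : ∀ K : Submodule ℝ (Fin n → ℝ), Submodule.map f (Submodule.map fB K) = K := by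
    intro K
    rw [← Submodule.map_comp]
    have : f ∘ₗ fB = LinearMap.id := LinearMap.ext hffB
    rw [this, Submodule.map_id]
  have hfamfB : ∀ K ∈ fam, Submodule.map fB K ∈ fam := by
    intro K hK
    refine ⟨hfBP hK.1, ?_, ?_⟩
    · rw [hfB, IrrPt.finrank_map_Φ hBA hAB]
      exact hK.2.1
    · rw [hintD_iff]
      have h1 := hgrint (Submodule.map fB K)
      rw [hmapfB] at h1
      have h2 := (hintD_iff K).mp hK.2.2
      rw [← h1] at h2
      exact h2.of_image
  -- the invariant relatively open union
  set U : Set (ℙ ℝ (Fin n → ℝ)) := ⋃ K ∈ fam, (D \ closure (D \ IrrPt.PK K)) with hU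
  have hUD : U ⊆ D := Set.iUnion₂_subset fun K hK => Set.diff_subset
  have hUne : U.Nonempty := by
    obtain ⟨x, hx⟩ := (hintD_iff K₀).mp hK₀int
    exact ⟨x, Set.mem_biUnion hK₀fam hx⟩
  have hgU : g '' U = U := by
    rw [hU, Set.image_iUnion₂]
    apply Set.Subset.antisymm
    · refine Set.iUnion₂_subset fun K hK => ?_
      rw [hgrint K]
      exact Set.subset_biUnion_of_mem
        (u := fun K => D \ closure (D \ IrrPt.PK K)) (hfamf K hK)
    · intro x hx
      rw [Set.mem_iUnion₂] at hx
      obtain ⟨K, hK, hxK⟩ := hx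
      rw [Set.mem_iUnion₂]
      refine ⟨Submodule.map fB K, hfamfB K hK, ?_⟩
      rw [hgrint (Submodule.map fB K), hmapfB]
      exact hxK
  -- by minimality, U covers D
  have hDU : D ⊆ U := by
    by_contra hnsub
    have hEne : (D \ U).Nonempty := by
      rw [Set.diff_nonempty]
      exact fun h => hnsub h
    set V : Set (ℙ ℝ (Fin n → ℝ)) := ⋃ K ∈ fam, (closure (D \ IrrPt.PK K))ᶜ with hV
    have hVopen : IsOpen V :=
      isOpen_iUnion fun K => isOpen_iUnion fun _ => isClosed_closure.isOpen_compl
    have hUV : U = D ∩ V := by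
      rw [hU, hV, Set.inter_iUnion₂]
      apply Set.iUnion₂_congr
      intro K hK
      rw [Set.diff_eq]
    have hDUV : D \ U = D \ V := by rw [hUV, Set.diff_self_inter]
    have hEcomp : IsCompact (D \ U) := by
      rw [hDUV]
      exact hDcomp.diff hVopen
    have hEinv : g '' (D \ U) = D \ U := by
      rw [Set.image_diff hginj, hDinv, hgU]
    have := hDmin (D \ U) Set.diff_subset hEne hEcomp hEinv
    obtain ⟨x, hx⟩ := hUne
    have hxD : x ∈ D := hUD hx
    rw [← this] at hxD
    exact hxD.2 hx
  -- compactness gives finitely many minimal pieces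
  have hcover : (Set.univ : Set D) ⊆ ⋃ K : fam, intD K.1 := by
    rintro x -
    have hxU : (x : ℙ ℝ (Fin n → ℝ)) ∈ U := hDU x.2
    rw [hU, Set.mem_iUnion₂] at hxU
    obtain ⟨K, hK, hxK⟩ := hxU
    rw [← hrint K] at hxK
    obtain ⟨y, hy, hyx⟩ := hxK
    have : y = x := Subtype.ext hyx
    subst this
    exact Set.mem_iUnion.mpr ⟨⟨K, hK⟩, hy⟩
  obtain ⟨t, ht⟩ := isCompact_univ.elim_finite_subcover
    (fun K : fam => intD K.1) (fun K => isOpen_interior) hcover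
  have hfamfin : fam.Finite := by
    have hsub₂ : fam ⊆ (fun K : fam => K.1) '' (t : Set fam) := by
      intro K hK
      obtain ⟨x, hx⟩ := hK.2.2
      have hxt := ht (Set.mem_univ x)
      rw [Set.mem_iUnion₂] at hxt
      obtain ⟨i, hit, hxi⟩ := hxt
      have hKi : K = i.1 := by
        by_contra hne
        have hdd := hdisj K hK i.1 i.2 hne
        rw [Set.eq_empty_iff_forall_notMem] at hdd
        exact hdd x ⟨hx, hxi⟩
      exact ⟨i, hit, hKi.symm⟩
    exact Set.Finite.subset (t.finite_toSet.image _) hsub₂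
  -- a periodic member of the family
  haveI : Finite ↥fam := hfamfin.to_subtype
  set Ψ : Submodule ℝ (Fin n → ℝ) → Submodule ℝ (Fin n → ℝ) := Submodule.map f with hΨ
  have hsfam : ∀ m : ℕ, Ψ^[m] K₀ ∈ fam := by
    intro m
    induction m with
    | zero => simpa using hK₀fam
    | succ m ih =>
        rw [Function.iterate_succ_apply']
        exact hfamf _ ih
  set sfun : ℕ → ↥fam := fun m => ⟨Ψ^[m] K₀, hsfam m⟩ with hsfun
  obtain ⟨a, b, hneab, heqab⟩ := Finite.exists_ne_map_eq_of_infinite sfun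
  wlog hab : a < b generalizing a b
  · exact this b a hneab.symm heqab.symm (by omega)
  have heq' : Ψ^[b] K₀ = Ψ^[a] K₀ := (congrArg Subtype.val heqab).symm
  set m := b - a with hm
  have hm1 : 1 ≤ m := by omega
  set K' : Submodule ℝ (Fin n → ℝ) := Ψ^[a] K₀ with hK'
  have hK'fam : K' ∈ fam := hsfam a
  have hper : Ψ^[m] K' = K' := by
    rw [hK', ← Function.iterate_add_apply]
    have hba : m + a = b := by omega
    rw [hba, heq']
  have h2 : (Submodule.map (IrrPt.Φ A))^[m] K' = K' := by
    rw [← hfΦ]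
    exact hper
  rw [IrrPt.iterate_map_eq] at h2
  have hWinv : ∀ x ∈ K', Matrix.mulVec ((A ^ m).map (fun q : ℚ => (q : ℝ))) x ∈ K' := by
    intro x hx
    have hmem : IrrPt.Φ (A ^ m) x ∈ Submodule.map (IrrPt.Φ (A ^ m)) K' :=
      Submodule.mem_map_of_mem hx
    rw [h2] at hmem
    simpa [IrrPt.Φ, Matrix.mulVecLin_apply] using hmem
  obtain ⟨S, hS⟩ := hK'fam.1.rational
  rcases hsub m hm1 K' ⟨S, hS⟩ hWinv with hbot | htop
  · obtain ⟨x, hx⟩ := hK'fam.2.2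
    have hxPK : x ∈ (Subtype.val : D → ℙ ℝ (Fin n → ℝ)) ⁻¹' (IrrPt.PK K') :=
      interior_subset hx
    have hrep : x.1.rep ∈ K' := hxPK
    rw [hbot, Submodule.mem_bot] at hrep
    exact x.1.rep_nonzero hrep
  · have hKn : finrank ℝ K' = n := by
      rw [htop, finrank_top]
      simp
    rw [hK'fam.2.1] at hKn
    omega
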